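/- Let P ⊂ ℝ^d be a locally finite point set, let C be a set of occlusion quotients for P, let T > 0 and let D ⊂ ℝ^d be a bounded set. Then there are only finitely many c ∈ C with P_* ∩ cP_* ∩ T·D ≠ ∅, in the sum Σ_{F ⊂ C, #F < ∞} (−1)^{#F} #((P_* ∩ ⋂_{c∈F} cP_*) ∩ T·D) over all finite subsets F of C only finitely many terms are nonzero (the empty set F = ∅ contributing #(P_* ∩ T·D)), and #(P̂ ∩ T·D) = Σ_{F ⊂ C, #F < ∞} (−1)^{#F} #((P_* ∩ ⋂_{c∈F} cP_*) ∩ T·D). -/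
import Mathlib


open MeasureTheory Filter Pointwise

/-- The set of points of `P` visible from the origin. -/
def visible {d : ℕ} (P : Set (Fin d → ℝ)) : Set (Fin d → ℝ) :=
  {x ∈ P | ∀ t : ℝ, t ∈ Set.Ioo (0:ℝ) 1 → t • x ∉ P}

/-- `P` is locally finite. -/
def IsLocallyFinite {d : ℕ} (P : Set (Fin d → ℝ)) : Prop :=
  ∀ D : Set (Fin d → ℝ), Bornology.IsBounded D → (P ∩ D).Finite

/-- `C ⊆ ℝ_{>1}` is a set of occlusion quotients for `P`: every invisible point of `P`
is a `c`-multiple of a point of `P` for some `c ∈ C`. -/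
def IsOcclusionSet {d : ℕ} (P : Set (Fin d → ℝ)) (C : Set ℝ) : Prop :=
  C ⊆ Set.Ioi 1 ∧ ∀ x ∈ P \ visible P, ∃ c ∈ C, c⁻¹ • x ∈ P

open scoped Classical in
lemma ie_aux {ι α : Type*} (s : Finset ι) (B : ι → Set α) (a : α) :
    (if ∀ i ∈ s, a ∉ B i then (1:ℤ) else 0) =
      ∑ t ∈ s.powerset, (-1:ℤ)^t.card * (if ∀ i ∈ t, a ∈ B i then (1:ℤ) else 0) := by
  have h1 : ∏ i ∈ s, ((if a ∈ B i then (-1:ℤ) else 0) + 1)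
      = ∑ t ∈ s.powerset, (∏ i ∈ t, (if a ∈ B i then (-1:ℤ) else 0)) * ∏ i ∈ s \ t, 1 :=
    Finset.prod_add _ _ s
  have h2 : ∏ i ∈ s, ((if a ∈ B i then (-1:ℤ) else 0) + 1)
      = (if ∀ i ∈ s, a ∉ B i then (1:ℤ) else 0) := by
    rw [← Finset.prod_boole]
    refine Finset.prod_congr rfl fun i _ => ?_
    by_cases h : a ∈ B i <;> simp [h]
  have h3 : ∀ t : Finset ι, (∏ i ∈ t, (if a ∈ B i then (-1:ℤ) else 0))
      = (-1:ℤ)^t.card * (if ∀ i ∈ t, a ∈ B i then (1:ℤ) else 0) := by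
    intro t
    have : ∀ i, (if a ∈ B i then (-1:ℤ) else 0) = (-1) * (if a ∈ B i then (1:ℤ) else 0) := by
      intro i; by_cases h : a ∈ B i <;> simp [h]
    simp_rw [this]
    rw [Finset.prod_mul_distrib, Finset.prod_const, Finset.prod_boole]
  rw [← h2, h1]
  refine Finset.sum_congr rfl fun t _ => ?_
  rw [h3 t]; simp

open scoped Classical in
lemma ie {ι α : Type*} (s : Finset ι) (A : Finset α) (B : ι → Set α) :
    ∑ a ∈ A, (if ∀ i ∈ s, a ∉ B i then (1:ℤ) else 0) =
      ∑ t ∈ s.powerset, (-1:ℤ)^t.card * ∑ a ∈ A, (if ∀ i ∈ t, a ∈ B i then (1:ℤ) else 0) := by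
  simp_rw [Finset.mul_sum]
  rw [Finset.sum_comm]
  exact Finset.sum_congr rfl fun a _ => ie_aux s B a

theorem stmt4 {d : ℕ} (P : Set (Fin d → ℝ)) (hP : IsLocallyFinite P)
    (C : Set ℝ) (hC : IsOcclusionSet P C)
    (T : ℝ) (hT : 0 < T) (D : Set (Fin d → ℝ)) (hD : Bornology.IsBounded D) :
    {c : ℝ | c ∈ C ∧ ((P \ {0}) ∩ c • (P \ {0}) ∩ T • D).Nonempty}.Finite ∧
    (Function.support (fun F : {F : Finset ℝ // ↑F ⊆ C} =>
      ((-1 : ℤ) ^ (F : Finset ℝ).card *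
        Nat.card ((P \ {0}) ∩ (⋂ c ∈ (F : Finset ℝ), c • (P \ {0})) ∩ T • D :
          Set (Fin d → ℝ))))).Finite ∧
    (Nat.card (visible P ∩ T • D : Set (Fin d → ℝ)) : ℤ) =
      ∑ᶠ F : {F : Finset ℝ // ↑F ⊆ C},
        (-1 : ℤ) ^ (F : Finset ℝ).card *
          Nat.card ((P \ {0}) ∩ (⋂ c ∈ (F : Finset ℝ), c • (P \ {0})) ∩ T • D :
            Set (Fin d → ℝ)) := by
  classical
  obtain ⟨hC1, hC2⟩ := hC
  set Q : Set (Fin d → ℝ) := P \ {0} with hQdef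
  have hTD : Bornology.IsBounded (T • D) := hD.smul₀ T
  have hA : (Q ∩ T • D).Finite := (hP _ hTD).subset (fun x hx => ⟨hx.1.1, hx.2⟩)
  obtain ⟨R, hR⟩ := hTD.subset_closedBall 0
  have hK : (P ∩ Metric.closedBall 0 R).Finite := hP _ Metric.isBounded_closedBall
  -- finitely many possible occluding quotients for each point
  have hCx : ∀ x ∈ Q ∩ T • D, {c : ℝ | 1 < c ∧ c⁻¹ • x ∈ P}.Finite := by
    intro x hx
    have hx0 : x ≠ 0 := hx.1.2
    have hxR : ‖x‖ ≤ R := by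
      have := hR hx.2
      simpa [Metric.mem_closedBall, dist_zero_right] using this
    apply Set.Finite.of_finite_image (f := fun c : ℝ => c⁻¹ • x)
    · apply hK.subset
      rintro _ ⟨c, ⟨hc1, hcP⟩, rfl⟩
      refine ⟨hcP, ?_⟩
      have hnorm : ‖c⁻¹ • x‖ = ‖c⁻¹‖ * ‖x‖ := norm_smul _ _
      have hinv : ‖(c⁻¹ : ℝ)‖ ≤ 1 := by
        rw [Real.norm_eq_abs, abs_of_nonneg (by positivity)]
        exact inv_le_one_of_one_le₀ hc1.le
      have : ‖c⁻¹ • x‖ ≤ ‖x‖ := by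
        rw [hnorm]
        calc ‖(c⁻¹:ℝ)‖ * ‖x‖ ≤ 1 * ‖x‖ := by
              exact mul_le_mul_of_nonneg_right hinv (norm_nonneg _)
          _ = ‖x‖ := one_mul _
      simp [Metric.mem_closedBall, dist_zero_right]
      linarith
    · intro c1 h1 c2 h2 heq
      have := smul_left_injective ℝ hx0 heq
      exact inv_injective this
  have hC' : {c : ℝ | c ∈ C ∧ (Q ∩ c • Q ∩ T • D).Nonempty}.Finite := by
    apply (Set.Finite.biUnion hA hCx).subset
    rintro c ⟨hcC, x, hx⟩
    have hc1 : 1 < c := hC1 hcC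
    have hc0 : c ≠ 0 := by positivity
    have hmem : c⁻¹ • x ∈ Q := (Set.mem_smul_set_iff_inv_smul_mem₀ hc0 _ _).1 hx.1.2
    exact Set.mem_biUnion (⟨hx.1.1, hx.2⟩ : x ∈ Q ∩ T • D) ⟨hc1, hmem.1⟩
  refine ⟨hC', ?_⟩
  set s : Finset ℝ := hC'.toFinset with hsdef
  have hsmem : ∀ c : ℝ, c ∈ s ↔ c ∈ C ∧ (Q ∩ c • Q ∩ T • D).Nonempty := by
    intro c; rw [hsdef, Set.Finite.mem_toFinset]; rfl
  have hsC : ↑s ⊆ C := fun c hc => ((hsmem c).1 hc).1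
  -- term sets for F ⊄ s are empty
  have hMempty : ∀ F : Finset ℝ, ↑F ⊆ C → ¬ F ⊆ s →
      (Q ∩ (⋂ c ∈ F, c • Q) ∩ T • D) = ∅ := by
    intro F hF hFs
    obtain ⟨c, hcF, hcs⟩ := Finset.not_subset.1 hFs
    ext x
    simp only [Set.mem_empty_iff_false, iff_false]
    rintro ⟨⟨hxQ, hxI⟩, hxT⟩
    exact hcs ((hsmem c).2 ⟨hF hcF, ⟨x, ⟨⟨hxQ, Set.mem_iInter₂.1 hxI c hcF⟩, hxT⟩⟩⟩)
  set Afin : Finset (Fin d → ℝ) := hA.toFinset with hAfin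
  have hAmem : ∀ x, x ∈ Afin ↔ x ∈ Q ∧ x ∈ T • D := by
    intro x; rw [hAfin, Set.Finite.mem_toFinset]; rfl
  -- card of term sets
  have hMfin : ∀ F : Finset ℝ, (Q ∩ (⋂ c ∈ F, c • Q) ∩ T • D).Finite :=
    fun F => hA.subset (fun x hx => ⟨hx.1.1, hx.2⟩)
  have hcard : ∀ F : Finset ℝ,
      (Nat.card (Q ∩ (⋂ c ∈ F, c • Q) ∩ T • D : Set (Fin d → ℝ)) : ℤ) =
        ∑ a ∈ Afin, (if ∀ i ∈ F, a ∈ i • Q then (1:ℤ) else 0) := by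
    intro F
    rw [Finset.sum_boole, Nat.card_coe_set_eq, Set.ncard_eq_toFinset_card _ (hMfin F)]
    norm_cast
    congr 1
    ext x
    simp only [Set.Finite.mem_toFinset, Set.mem_inter_iff, Set.mem_iInter, Finset.mem_filter,
      hAmem]
    tauto
  -- the visible set as a filter
  have hvisQ : ∀ x, x ∈ visible P ∩ T • D ↔ x ∈ Afin ∧ ∀ i ∈ s, x ∉ i • Q := by
    intro x
    constructor
    · rintro ⟨⟨hxP, hxvis⟩, hxT⟩
      have hx0 : x ≠ 0 := by
        rintro rfl
        exact hxvis (1/2) (by norm_num) (by simpa using hxP)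
      refine ⟨(hAmem x).2 ⟨⟨hxP, hx0⟩, hxT⟩, ?_⟩
      intro c hcs hxc
      have hc1 : 1 < c := hC1 ((hsmem c).1 hcs).1
      have hc0 : c ≠ 0 := by positivity
      have hy : c⁻¹ • x ∈ Q := (Set.mem_smul_set_iff_inv_smul_mem₀ hc0 _ _).1 hxc
      exact hxvis c⁻¹ ⟨by positivity, inv_lt_one_of_one_lt₀ hc1⟩ hy.1
    · rintro ⟨hxA, hnot⟩
      obtain ⟨⟨hxP, hx0⟩, hxT⟩ := (hAmem x).1 hxA
      refine ⟨⟨hxP, ?_⟩, hxT⟩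
      by_contra hxvis
      have : x ∈ P \ visible P := ⟨hxP, fun h => hxvis h.2⟩
      obtain ⟨c, hcC, hcy⟩ := hC2 x this
      have hc1 : 1 < c := hC1 hcC
      have hc0 : c ≠ 0 := by positivity
      have hy0 : c⁻¹ • x ≠ 0 := smul_ne_zero (inv_ne_zero hc0) hx0
      have hxc : x ∈ c • Q := (Set.mem_smul_set_iff_inv_smul_mem₀ hc0 _ _).2 ⟨hcy, hy0⟩
      have hcs : c ∈ s := (hsmem c).2 ⟨hcC, ⟨x, ⟨⟨⟨hxP, hx0⟩, hxc⟩, hxT⟩⟩⟩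
      exact hnot c hcs hxc
  have hviscard : (Nat.card (visible P ∩ T • D : Set (Fin d → ℝ)) : ℤ) =
      ∑ a ∈ Afin, (if ∀ i ∈ s, a ∉ i • Q then (1:ℤ) else 0) := by
    have hfin : (visible P ∩ T • D).Finite :=
      hA.subset (fun x hx => by
        have := (hvisQ x).1 hx
        exact (hAmem x).1 this.1)
    rw [Finset.sum_boole, Nat.card_coe_set_eq, Set.ncard_eq_toFinset_card _ hfin]
    norm_cast
    congr 1
    ext x
    simp only [Set.Finite.mem_toFinset, Finset.mem_filter]
    exact hvisQ x
  -- the finset of relevant index sets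
  set Tf : Finset {F : Finset ℝ // ↑F ⊆ C} :=
    s.powerset.attach.image
      (fun t => ⟨t.1, fun c hc => hsC (Finset.mem_powerset.1 t.2 hc)⟩) with hTf
  set f : {F : Finset ℝ // ↑F ⊆ C} → ℤ := fun F =>
    (-1 : ℤ) ^ (F : Finset ℝ).card *
      Nat.card ((P \ {0}) ∩ (⋂ c ∈ (F : Finset ℝ), c • (P \ {0})) ∩ T • D :
        Set (Fin d → ℝ)) with hf
  have hmemTf : ∀ G : {F : Finset ℝ // (F : Set ℝ) ⊆ C}, G.1 ⊆ s → G ∈ Tf := by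
    intro G hGs
    rw [hTf]
    apply Finset.mem_image.2
    exact ⟨⟨G.1, Finset.mem_powerset.2 hGs⟩, Finset.mem_attach _ _, Subtype.ext rfl⟩
  have hsupp : Function.support f ⊆ ↑Tf := by
    intro F hF
    apply hmemTf
    by_contra h
    apply hF
    rw [hf]
    simp only
    rw [hMempty F.1 F.2 h]
    simp
  refine ⟨Tf.finite_toSet.subset hsupp, ?_⟩
  rw [finsum_eq_sum_of_support_subset f hsupp]
  have hinj : ∀ a ∈ s.powerset.attach, ∀ b ∈ s.powerset.attach,
      (⟨a.1, fun c hc => hsC (Finset.mem_powerset.1 a.2 hc)⟩ : {F : Finset ℝ // ↑F ⊆ C}) =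
      ⟨b.1, fun c hc => hsC (Finset.mem_powerset.1 b.2 hc)⟩ → a = b := by
    intro a _ b _ hab
    injection hab with h
    exact Subtype.ext h
  rw [hTf, Finset.sum_image hinj]
  have hattach : ∑ t ∈ s.powerset.attach,
      f ⟨t.1, fun c hc => hsC (Finset.mem_powerset.1 t.2 hc)⟩
      = ∑ t ∈ s.powerset, (-1:ℤ)^t.card *
          Nat.card (Q ∩ (⋂ c ∈ t, c • Q) ∩ T • D : Set (Fin d → ℝ)) := by
    rw [← Finset.sum_attach s.powerset (fun t => (-1:ℤ)^t.card *
          Nat.card (Q ∩ (⋂ c ∈ t, c • Q) ∩ T • D : Set (Fin d → ℝ)))]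
  rw [hattach, hviscard, ie s Afin (fun i => i • Q)]
  refine Finset.sum_congr rfl fun t _ => ?_
  rw [← hcard t]
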